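/- Every subgroup of the semidihedral group SD_{2^n} (n ≥ 4) that is not equal to the whole group is cyclic, dihedral (possibly Klein four), or generalized quaternion. -/

import Mathlib

open Subgroup

private lemma pow_val_add' {H : Type*} [Group H] {m : ℕ} [NeZero m] (a : H) (ha : orderOf a = m)
    (i j : ZMod m) : a ^ (i + j).val = a ^ i.val * a ^ j.val := by
  have h := pow_mod_orderOf a (i.val + j.val)
  rw [ha] at h
  rw [ZMod.val_add, h, pow_add]

private lemma pow_val_sub' {H : Type*} [Group H] {m : ℕ} [NeZero m] (a : H) (ha : orderOf a = m)
    (i j : ZMod m) : a ^ (j - i).val = (a ^ i.val)⁻¹ * a ^ j.val := by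
  have h := pow_val_add' a ha (j - i) i
  rw [sub_add_cancel] at h
  rw [eq_inv_mul_iff_mul_eq, ← pow_add, Nat.add_comm, pow_add]
  exact h.symm

private lemma pow_val_natCast' {H : Type*} [Group H] {m : ℕ} [NeZero m] (a : H)
    (ha : orderOf a = m) (k : ℕ) : a ^ ((k : ZMod m)).val = a ^ k := by
  have h := pow_mod_orderOf a k
  rw [ha] at h
  rw [ZMod.val_natCast, h]

private lemma sd_iso_dihedral {H : Type*} [Group H] (m : ℕ) [NeZero m] (a t : H)
    (ha : orderOf a = m) (ht2 : t ^ 2 = 1) (htr : t⁻¹ * a * t = a⁻¹)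
    (htn : t ∉ Subgroup.zpowers a)
    (hcov : ∀ h : H, (∃ k : ℕ, a ^ k = h) ∨ (∃ k : ℕ, t * a ^ k = h)) :
    Nonempty (H ≃* DihedralGroup m) := by
  have hsw : ∀ v : ℕ, a ^ v * t = t * (a ^ v)⁻¹ := by
    intro v
    have h1 : t⁻¹ * a ^ v * t = (a ^ v)⁻¹ := by
      have h := congrArg (fun z => z ^ v) htr
      simp only [inv_pow] at h
      have h2 : (t⁻¹ * a * t⁻¹⁻¹) ^ v = t⁻¹ * a ^ v * t⁻¹⁻¹ := conj_pow
      rw [inv_inv] at h2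
      exact h2.symm.trans h
    rw [← h1]; group
  let f : DihedralGroup m → H := fun p =>
    match p with
    | DihedralGroup.r i => a ^ i.val
    | DihedralGroup.sr i => t * a ^ i.val
  have hmul : ∀ p q : DihedralGroup m, f (p * q) = f p * f q := by
    rintro (i | i) (j | j)
    · show a ^ (i + j).val = a ^ i.val * a ^ j.val
      exact pow_val_add' a ha i j
    · show t * a ^ (j - i).val = a ^ i.val * (t * a ^ j.val)
      rw [pow_val_sub' a ha, ← mul_assoc, ← mul_assoc, hsw]
    · show t * a ^ (i + j).val = t * a ^ i.val * a ^ j.val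
      rw [pow_val_add' a ha, mul_assoc]
    · show a ^ (j - i).val = t * a ^ i.val * (t * a ^ j.val)
      rw [pow_val_sub' a ha]
      calc (a ^ i.val)⁻¹ * a ^ j.val = t ^ 2 * ((a ^ i.val)⁻¹ * a ^ j.val) := by
            rw [ht2, one_mul]
        _ = t * (t * (a ^ i.val)⁻¹) * a ^ j.val := by rw [sq]; group
        _ = t * (a ^ i.val * t) * a ^ j.val := by rw [hsw]
        _ = t * a ^ i.val * (t * a ^ j.val) := by group
  let φ : DihedralGroup m →* H := MonoidHom.mk' f hmul
  have hinj : Function.Injective φ := by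
    rintro (i | i) (j | j) hij
    · have : a ^ i.val = a ^ j.val := hij
      rw [pow_inj_mod, ha, Nat.mod_eq_of_lt (ZMod.val_lt i), Nat.mod_eq_of_lt (ZMod.val_lt j)]
        at this
      exact congrArg DihedralGroup.r (ZMod.val_injective m this)
    · exfalso; apply htn
      have : a ^ i.val = t * a ^ j.val := hij
      have ht' : t = a ^ i.val * (a ^ j.val)⁻¹ := by rw [this]; group
      rw [ht']
      exact mul_mem (pow_mem (mem_zpowers a) _) (inv_mem (pow_mem (mem_zpowers a) _))
    · exfalso; apply htn
      have : t * a ^ i.val = a ^ j.val := hij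
      have ht' : t = a ^ j.val * (a ^ i.val)⁻¹ := by rw [← this]; group
      rw [ht']
      exact mul_mem (pow_mem (mem_zpowers a) _) (inv_mem (pow_mem (mem_zpowers a) _))
    · have : t * a ^ i.val = t * a ^ j.val := hij
      have h2 : a ^ i.val = a ^ j.val := mul_left_cancel this
      rw [pow_inj_mod, ha, Nat.mod_eq_of_lt (ZMod.val_lt i), Nat.mod_eq_of_lt (ZMod.val_lt j)]
        at h2
      exact congrArg DihedralGroup.sr (ZMod.val_injective m h2)
  have hsurj : Function.Surjective φ := by
    intro h
    rcases hcov h with ⟨k, hk⟩ | ⟨k, hk⟩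
    · refine ⟨DihedralGroup.r (k : ZMod m), ?_⟩
      show a ^ ((k : ZMod m)).val = h
      rw [pow_val_natCast' a ha]; exact hk
    · refine ⟨DihedralGroup.sr (k : ZMod m), ?_⟩
      show t * a ^ ((k : ZMod m)).val = h
      rw [pow_val_natCast' a ha]; exact hk
  exact ⟨(MulEquiv.ofBijective φ ⟨hinj, hsurj⟩).symm⟩

private lemma sd_iso_quaternion {H : Type*} [Group H] (m : ℕ) [NeZero m] (a t : H)
    (ha : orderOf a = 2 * m) (ht2 : t ^ 2 = a ^ m) (htr : t⁻¹ * a * t = a⁻¹)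
    (htn : t ∉ Subgroup.zpowers a)
    (hcov : ∀ h : H, (∃ k : ℕ, a ^ k = h) ∨ (∃ k : ℕ, t * a ^ k = h)) :
    Nonempty (H ≃* QuaternionGroup m) := by
  have hm : 0 < m := Nat.pos_of_ne_zero (NeZero.ne m)
  have : NeZero (2 * m) := ⟨by omega⟩
  have hsw : ∀ v : ℕ, a ^ v * t = t * (a ^ v)⁻¹ := by
    intro v
    have h1 : t⁻¹ * a ^ v * t = (a ^ v)⁻¹ := by
      have h := congrArg (fun z => z ^ v) htr
      simp only [inv_pow] at h
      have h2 : (t⁻¹ * a * t⁻¹⁻¹) ^ v = t⁻¹ * a ^ v * t⁻¹⁻¹ := conj_pow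
      rw [inv_inv] at h2
      exact h2.symm.trans h
    rw [← h1]; group
  have hvm : ((m : ZMod (2 * m))).val = m := by
    rw [ZMod.val_natCast, Nat.mod_eq_of_lt (by omega)]
  let f : QuaternionGroup m → H := fun p =>
    match p with
    | QuaternionGroup.a i => a ^ i.val
    | QuaternionGroup.xa i => t * a ^ i.val
  have hmul : ∀ p q : QuaternionGroup m, f (p * q) = f p * f q := by
    rintro (i | i) (j | j)
    · show a ^ (i + j).val = a ^ i.val * a ^ j.val
      exact pow_val_add' a ha i j
    · show t * a ^ (j - i).val = a ^ i.val * (t * a ^ j.val)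
      rw [pow_val_sub' a ha, ← mul_assoc, ← mul_assoc, hsw]
    · show t * a ^ (i + j).val = t * a ^ i.val * a ^ j.val
      rw [pow_val_add' a ha, mul_assoc]
    · show a ^ ((m : ZMod (2 * m)) + j - i).val = t * a ^ i.val * (t * a ^ j.val)
      have hsplit : ((m : ZMod (2 * m)) + j - i) = (m : ZMod (2 * m)) + (j - i) := by ring
      rw [hsplit, pow_val_add' a ha, pow_val_sub' a ha, hvm]
      calc a ^ m * ((a ^ i.val)⁻¹ * a ^ j.val)
          = t ^ 2 * ((a ^ i.val)⁻¹ * a ^ j.val) := by rw [ht2]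
        _ = t * (t * (a ^ i.val)⁻¹) * a ^ j.val := by rw [sq]; group
        _ = t * (a ^ i.val * t) * a ^ j.val := by rw [hsw]
        _ = t * a ^ i.val * (t * a ^ j.val) := by group
  let φ : QuaternionGroup m →* H := MonoidHom.mk' f hmul
  have hinj : Function.Injective φ := by
    rintro (i | i) (j | j) hij
    · have : a ^ i.val = a ^ j.val := hij
      rw [pow_inj_mod, ha, Nat.mod_eq_of_lt (ZMod.val_lt i), Nat.mod_eq_of_lt (ZMod.val_lt j)]
        at this
      exact congrArg QuaternionGroup.a (ZMod.val_injective (2 * m) this)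
    · exfalso; apply htn
      have : a ^ i.val = t * a ^ j.val := hij
      have ht' : t = a ^ i.val * (a ^ j.val)⁻¹ := by rw [this]; group
      rw [ht']
      exact mul_mem (pow_mem (Subgroup.mem_zpowers a) _)
        (inv_mem (pow_mem (Subgroup.mem_zpowers a) _))
    · exfalso; apply htn
      have : t * a ^ i.val = a ^ j.val := hij
      have ht' : t = a ^ j.val * (a ^ i.val)⁻¹ := by rw [← this]; group
      rw [ht']
      exact mul_mem (pow_mem (Subgroup.mem_zpowers a) _)
        (inv_mem (pow_mem (Subgroup.mem_zpowers a) _))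
    · have : t * a ^ i.val = t * a ^ j.val := hij
      have h2 : a ^ i.val = a ^ j.val := mul_left_cancel this
      rw [pow_inj_mod, ha, Nat.mod_eq_of_lt (ZMod.val_lt i), Nat.mod_eq_of_lt (ZMod.val_lt j)]
        at h2
      exact congrArg QuaternionGroup.xa (ZMod.val_injective (2 * m) h2)
  have hsurj : Function.Surjective φ := by
    intro h
    rcases hcov h with ⟨k, hk⟩ | ⟨k, hk⟩
    · refine ⟨QuaternionGroup.a (k : ZMod (2 * m)), ?_⟩
      show a ^ ((k : ZMod (2 * m))).val = h
      rw [pow_val_natCast' a ha]; exact hk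
    · refine ⟨QuaternionGroup.xa (k : ZMod (2 * m)), ?_⟩
      show t * a ^ ((k : ZMod (2 * m))).val = h
      rw [pow_val_natCast' a ha]; exact hk
  exact ⟨(MulEquiv.ofBijective φ ⟨hinj, hsurj⟩).symm⟩

private lemma sd_eq_of_card_two {α : Type*} (h : Nat.card α = 2) {a b c : α}
    (hac : a ≠ c) (hbc : b ≠ c) : a = b := by
  obtain ⟨u, v, huv, huniv⟩ := Nat.card_eq_two_iff.mp h
  have hall : ∀ z : α, z = u ∨ z = v := by
    intro z
    have hz : z ∈ ({u, v} : Set α) := by rw [huniv]; trivial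
    simpa using hz
  rcases hall a with ha | ha <;> rcases hall b with hb | hb <;> rcases hall c with hc | hc <;>
    subst ha <;> subst hb <;> first | rfl | (exfalso; subst hc; tauto)

private lemma sd_isCyclic_zpowers {G : Type*} [Group G] (x : G) :
    IsCyclic (Subgroup.zpowers x) := by
  refine ⟨⟨⟨x, Subgroup.mem_zpowers x⟩, fun b => ?_⟩⟩
  obtain ⟨k, hk⟩ := Subgroup.mem_zpowers_iff.mp b.2
  exact ⟨k, Subtype.ext (by simpa using hk)⟩

/-- Every proper subgroup of `SD_{2^n}` (n ≥ 4) is cyclic, dihedral (possibly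
Klein four, i.e. `DihedralGroup m` with `m ≥ 2`), or generalized quaternion. -/
theorem sd_proper_subgroups {G : Type*} [Group G] [Finite G] (n : ℕ) (hn : 4 ≤ n) (x y : G)
    (hG : Nat.card G = 2 ^ n) (hx : orderOf x = 2 ^ (n - 1)) (hy : y ^ 2 = 1)
    (hxy : y⁻¹ * x * y = x ^ (2 ^ (n - 2) - 1)) (Q : Subgroup G) (hQ : Q ≠ ⊤) :
    IsCyclic Q ∨ (∃ m : ℕ, 2 ≤ m ∧ Nonempty (Q ≃* DihedralGroup m)) ∨
      (∃ m : ℕ, 2 ≤ m ∧ Nonempty (Q ≃* QuaternionGroup m)) := by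
  set s : ℕ := 2 ^ (n - 2) - 1 with hs
  have hsp : s + 1 = 2 ^ (n - 2) := Nat.succ_pred_eq_of_pos (Nat.pow_pos (by norm_num))
  have hs4 : 4 ≤ 2 ^ (n - 2) := by
    calc (4:ℕ) = 2 ^ 2 := by norm_num
    _ ≤ 2 ^ (n - 2) := Nat.pow_le_pow_right (by norm_num) (by omega)
  have hp2 : (2:ℕ) ^ (n - 1) = 2 * 2 ^ (n - 2) := by
    rw [← pow_succ']
    congr 1
    omega
  set N : Subgroup G := Subgroup.zpowers x with hN
  have hcardN : Nat.card N = 2 ^ (n - 1) := by rw [hN, Nat.card_zpowers, hx]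
  have hyinv : y⁻¹ = y := by
    have h := hy
    rw [sq] at h
    exact inv_eq_of_mul_eq_one_right h
  have hcnj : ∀ w : ℤ, y⁻¹ * x ^ w * y = x ^ ((s : ℤ) * w) := by
    intro w
    have h2 : (y⁻¹ * x * y⁻¹⁻¹) ^ w = y⁻¹ * x ^ w * y⁻¹⁻¹ := conj_zpow
    rw [inv_inv] at h2
    rw [← h2, hxy, ← zpow_natCast x s, ← zpow_mul]
  have hyN : y ∉ N := by
    intro hyn
    obtain ⟨w, hw⟩ := mem_zpowers_iff.mp hyn
    have hcomm : y⁻¹ * x * y = x := by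
      rw [← hw]; group
    rw [hxy] at hcomm
    have hdvd : orderOf x ∣ s - 1 := by
      apply orderOf_dvd_of_pow_eq_one
      have : x ^ (s - 1) * x = x ^ s := by
        rw [← pow_succ]
        congr 1
        omega
      have h3 := hcomm
      calc x ^ (s - 1) = x ^ s * x⁻¹ := by rw [← this]; group
        _ = x * x⁻¹ := by rw [h3]
        _ = 1 := mul_inv_cancel x
    rw [hx] at hdvd
    have := Nat.le_of_dvd (by omega) hdvd
    omega
  have hidx : Nat.card (G ⧸ N) = 2 := by
    have h1 := Subgroup.index_mul_card N
    rw [hcardN, hG] at h1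
    have h2 : (2:ℕ) ^ n = 2 * 2 ^ (n - 1) := by
      rw [← pow_succ']; congr 1; omega
    rw [h2] at h1
    rw [← Subgroup.index_eq_card]
    exact Nat.eq_of_mul_eq_mul_right (Nat.pow_pos (by norm_num)) h1
  have hcov : ∀ g : G, g ∉ N → y⁻¹ * g ∈ N := by
    intro g hg
    have h1 : ((y : G ⧸ N)) = ((g : G) : G ⧸ N) := by
      apply sd_eq_of_card_two hidx (c := ((1 : G) : G ⧸ N))
      · intro hc
        exact hyN (by simpa using (QuotientGroup.eq.mp hc))
      · intro hc
        exact hg (by simpa using (QuotientGroup.eq.mp hc))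
    exact QuotientGroup.eq.mp h1
  by_cases hQN : Q ≤ N
  · haveI : IsCyclic N := sd_isCyclic_zpowers x
    exact Or.inl (Subgroup.isCyclic_of_le hQN)
  rw [SetLike.not_le_iff_exists] at hQN
  obtain ⟨t, htQ, htN⟩ := hQN
  have htyN : y⁻¹ * t ∈ N := hcov t htN
  obtain ⟨k, hk⟩ := mem_zpowers_iff.mp htyN
  have ht : t = y * x ^ k := by rw [hk, ← hyinv]; group
  have hcov2 : ∀ g : G, g ∉ N → t⁻¹ * g ∈ N := by
    intro g hg
    have h1 : t⁻¹ * g = (y⁻¹ * t)⁻¹ * (y⁻¹ * g) := by group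
    rw [h1]
    exact mul_mem (inv_mem htyN) (hcov g hg)
  haveI : IsCyclic N := sd_isCyclic_zpowers x
  haveI : IsCyclic (Q ⊓ N : Subgroup G) := Subgroup.isCyclic_of_le inf_le_right
  obtain ⟨⟨a, haQN⟩, hgen⟩ := IsCyclic.exists_generator (α := (Q ⊓ N : Subgroup G))
  have haQ : a ∈ Q := haQN.1
  have haN : a ∈ N := haQN.2
  have hzpa : ∀ b : G, b ∈ Q ⊓ N → b ∈ zpowers a := by
    intro b hb
    obtain ⟨w, hw⟩ := mem_zpowers_iff.mp (hgen ⟨b, hb⟩)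
    exact mem_zpowers_iff.mpr ⟨w, by simpa using congrArg Subtype.val hw⟩
  obtain ⟨e, hen, hme⟩ := (Nat.dvd_prime_pow Nat.prime_two).mp (hG ▸ orderOf_dvd_natCard a)
  have htop : ∀ (h : N ≤ Q), False := by
    intro h
    apply hQ
    rw [eq_top_iff]
    intro g _
    by_cases hgN : g ∈ N
    · exact h hgN
    · have h2 := hcov2 g hgN
      have h3 : g = t * (t⁻¹ * g) := by group
      rw [h3]
      exact mul_mem htQ (h h2)
  have hele : e ≤ n - 2 := by
    by_contra hcon
    have hd := Subgroup.orderOf_dvd_natCard N haN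
    rw [hcardN, hme] at hd
    have he' : e ≤ n - 1 := (Nat.pow_dvd_pow_iff_le_right (by norm_num)).mp hd
    have he : e = n - 1 := by omega
    have hcard_za : Nat.card (zpowers a) = Nat.card N := by
      rw [Nat.card_zpowers, hme, he, hcardN]
    have hza : zpowers a = N :=
      Subgroup.eq_of_le_of_card_ge (zpowers_le.mpr haN) (le_of_eq hcard_za.symm)
    apply htop
    rw [← hza]
    exact zpowers_le.mpr haQ
  have ha2 : a ^ (2:ℕ) ^ (n - 2) = 1 := by
    apply orderOf_dvd_iff_pow_eq_one.mp
    rw [hme]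
    exact pow_dvd_pow 2 hele
  have htza : t ∉ zpowers a := fun hmem => htN (zpowers_le.mpr haN hmem)
  have hconj_a : t⁻¹ * a * t = a⁻¹ := by
    obtain ⟨w, hw⟩ := mem_zpowers_iff.mp haN
    have h1 : t⁻¹ * a * t = x ^ (-k) * (y⁻¹ * x ^ w * y) * x ^ k := by
      rw [ht, ← hw]; group
    rw [h1, hcnj w]
    have h2 : x ^ (-k) * x ^ ((s:ℤ) * w) * x ^ k = a ^ s := by
      rw [← hw, ← zpow_natCast (x ^ w) s, ← zpow_mul]
      group
    rw [h2]
    have h3 : a ^ s * a = 1 := by rw [← pow_succ, hsp]; exact ha2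
    exact eq_inv_of_mul_eq_one_left h3
  have ht2x : t ^ 2 = x ^ (k * (2:ℤ) ^ (n - 2)) := by
    have h1 : t ^ 2 = y ^ 2 * (y⁻¹ * x ^ k * y) * x ^ k := by rw [ht, sq, sq]; group
    rw [hy, one_mul, hcnj k, ← zpow_add] at h1
    rw [h1]
    congr 1
    have hsz : (s:ℤ) + 1 = 2 ^ (n - 2) := by exact_mod_cast hsp
    linear_combination k * hsz
  have ht2N : t ^ 2 ∈ N := mem_zpowers_iff.mpr ⟨k * 2 ^ (n - 2), ht2x.symm⟩
  have ht2za : t ^ 2 ∈ zpowers a := hzpa _ ⟨pow_mem htQ 2, ht2N⟩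
  have ht4 : (t ^ 2) ^ 2 = 1 := by
    rw [ht2x, sq, ← zpow_add]
    have h5 : (2:ℤ) ^ (n - 1) = 2 * 2 ^ (n - 2) := by exact_mod_cast hp2
    have hez : k * (2:ℤ) ^ (n - 2) + k * 2 ^ (n - 2) = ((2 ^ (n - 1) : ℕ) : ℤ) * k := by
      push_cast
      linear_combination (-k) * h5
    rw [hez, zpow_mul, zpow_natCast, ← hx, pow_orderOf_eq_one, one_zpow]
  have hfin_pow : ∀ b : G, b ∈ zpowers a → ∃ c : ℕ, a ^ c = b := by
    intro b hb
    exact (Submonoid.mem_powers_iff _ _).mp (mem_powers_iff_mem_zpowers.mpr hb)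
  set A : Q := ⟨a, haQ⟩ with hA
  set T : Q := ⟨t, htQ⟩ with hT
  have hAord : orderOf A = orderOf a := Subgroup.orderOf_mk a haQ
  have hTA_conj : T⁻¹ * A * T = A⁻¹ := Subtype.ext (by simpa using hconj_a)
  have hTza : T ∉ zpowers A := by
    intro hmem
    apply htza
    obtain ⟨w, hw⟩ := mem_zpowers_iff.mp hmem
    exact mem_zpowers_iff.mpr ⟨w, by simpa using congrArg Subtype.val hw⟩
  have hcovQ : ∀ h : Q, (∃ c : ℕ, A ^ c = h) ∨ (∃ c : ℕ, T * A ^ c = h) := by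
    rintro ⟨g, hgQ⟩
    by_cases hgN : g ∈ N
    · obtain ⟨c, hcg⟩ := hfin_pow g (hzpa g ⟨hgQ, hgN⟩)
      exact Or.inl ⟨c, Subtype.ext (by simpa using hcg)⟩
    · have h2 : t⁻¹ * g ∈ N := hcov2 g hgN
      have h2Q : t⁻¹ * g ∈ Q := mul_mem (inv_mem htQ) hgQ
      obtain ⟨c, hcg⟩ := hfin_pow _ (hzpa _ ⟨h2Q, h2⟩)
      refine Or.inr ⟨c, Subtype.ext ?_⟩
      show t * a ^ c = g
      rw [hcg]; group
  by_cases ht21 : t ^ 2 = 1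
  · by_cases he0 : e = 0
    · left
      have ha1 : a = 1 := orderOf_eq_one_iff.mp (by rw [hme, he0, pow_zero])
      have hA1 : A = 1 := Subtype.ext ha1
      refine ⟨⟨T, fun h => ?_⟩⟩
      rcases hcovQ h with ⟨c, hcg⟩ | ⟨c, hcg⟩
      · rw [← hcg, hA1, one_pow]
        exact ⟨0, by simp⟩
      · rw [← hcg, hA1, one_pow, mul_one]
        exact mem_zpowers T
    · right; left
      refine ⟨orderOf a, ?_, ?_⟩
      · rw [hme]
        calc (2:ℕ) = 2 ^ 1 := rfl
          _ ≤ 2 ^ e := Nat.pow_le_pow_right (by norm_num) (by omega)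
      · haveI : NeZero (orderOf a) := ⟨by rw [hme]; positivity⟩
        exact sd_iso_dihedral (orderOf a) A T hAord (Subtype.ext (by simpa using ht21))
          hTA_conj hTza hcovQ
  · have he1 : 1 ≤ e := by
      by_contra hcon
      have he0 : e = 0 := by omega
      have ha1 : a = 1 := orderOf_eq_one_iff.mp (by rw [hme, he0, pow_zero])
      obtain ⟨c, hcg⟩ := hfin_pow _ ht2za
      rw [ha1, one_pow] at hcg
      exact ht21 hcg.symm
    obtain ⟨c, hcg⟩ := hfin_pow _ ht2za
    have hmnd : ¬ ((2:ℕ) ^ e ∣ c) := by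
      intro hdvd
      apply ht21
      rw [← hcg]
      exact orderOf_dvd_iff_pow_eq_one.mp (hme ▸ hdvd)
    have h2c : (2:ℕ) ^ e ∣ 2 * c := by
      have hpow : a ^ (2 * c) = 1 := by
        rw [two_mul, pow_add, hcg, ← sq]; exact ht4
      exact hme ▸ orderOf_dvd_iff_pow_eq_one.mpr hpow
    have hd1 : (2:ℕ) ^ (e - 1) ∣ c := by
      have h1 : (2:ℕ) ^ e = 2 * 2 ^ (e - 1) := by
        rw [← pow_succ']; congr 1; omega
      rw [h1] at h2c
      exact (mul_dvd_mul_iff_left (two_ne_zero)).mp h2c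
    obtain ⟨d, hdc⟩ := hd1
    have hepow : (2:ℕ) ^ e = 2 ^ (e - 1) * 2 := by
      rw [← pow_succ]; congr 1; omega
    have hdodd : ∃ q, d = 2 * q + 1 := by
      rcases Nat.even_or_odd d with heven | hodd
      · exfalso
        apply hmnd
        obtain ⟨q, hq⟩ := heven
        exact ⟨q, by rw [hdc, hq, hepow]; ring⟩
      · obtain ⟨q, hq⟩ := hodd
        exact ⟨q, by omega⟩
    have hcmod : c % 2 ^ e = 2 ^ (e - 1) := by
      obtain ⟨q, hq⟩ := hdodd
      have h1 : c = 2 ^ e * q + 2 ^ (e - 1) := by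
        rw [hdc, hq, hepow]; ring
      rw [h1, Nat.mul_add_mod]
      exact Nat.mod_eq_of_lt (by rw [hepow]; omega)
    have ht2a : t ^ 2 = a ^ (2 ^ (e - 1)) := by
      rw [← hcg]
      apply pow_inj_mod.mpr
      rw [hme, hcmod]
      exact (Nat.mod_eq_of_lt (by rw [hepow]; omega)).symm
    by_cases he2 : e = 1
    · left
      have hta : t ^ 2 = a := by rw [ht2a, he2]; norm_num
      have hAT : A = T ^ 2 := Subtype.ext (by simpa using hta.symm)
      refine ⟨⟨T, fun h => ?_⟩⟩
      rcases hcovQ h with ⟨c', hc'⟩ | ⟨c', hc'⟩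
      · rw [← hc', hAT, ← pow_mul]
        exact pow_mem (mem_zpowers T) _
      · rw [← hc', hAT, ← pow_mul]
        exact mul_mem (mem_zpowers T) (pow_mem (mem_zpowers T) _)
    · right; right
      refine ⟨2 ^ (e - 1), ?_, ?_⟩
      · calc (2:ℕ) = 2 ^ 1 := rfl
          _ ≤ 2 ^ (e - 1) := Nat.pow_le_pow_right (by norm_num) (by omega)
      · haveI : NeZero ((2:ℕ) ^ (e - 1)) := ⟨by positivity⟩
        refine sd_iso_quaternion (2 ^ (e - 1)) A T ?_ (Subtype.ext (by simpa using ht2a))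
          hTA_conj hTza hcovQ
        rw [hAord, hme, ← pow_succ']
        congr 1
        omega
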